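/- For the trivial weight λ = 0, the set of Weyl group elements w of G₂ such that w·0 = w(ρ) − ρ = m₁'γ₁ + m₂'γ₂ has both coefficients m₁', m₂' even is exactly {1, s₁s₂s₁, s₂s₁s₂, (s₁s₂)³}, i.e. the elements of lengths 0, 3, 3, and 6. -/

import Mathlib

namespace G2

/-- The weight/root lattice of G₂ in coordinates: `(c₁, c₂)` represents `c₁α₁ + c₂α₂`,
where `α₁` is the short simple root and `α₂` is the long simple root. -/
def α1 : ℚ × ℚ := (1, 0)
def α2 : ℚ × ℚ := (0, 1)

/-- The simple reflection `s₁`: `s₁(α₁) = -α₁`, `s₁(α₂) = 3α₁ + α₂`. -/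
def s1fun : ℚ × ℚ → ℚ × ℚ := fun p => (-p.1 + 3 * p.2, p.2)
/-- The simple reflection `s₂`: `s₂(α₁) = α₁ + α₂`, `s₂(α₂) = -α₂`. -/
def s2fun : ℚ × ℚ → ℚ × ℚ := fun p => (p.1, p.1 - p.2)

lemma s1_invol : Function.Involutive s1fun := by
  intro p; rw [Prod.ext_iff]; constructor <;> simp [s1fun]

lemma s2_invol : Function.Involutive s2fun := by
  intro p; rw [Prod.ext_iff]; constructor <;> simp [s2fun]

/-- The simple reflections as permutations of the weight space. -/
def σ1 : Equiv.Perm (ℚ × ℚ) := Function.Involutive.toPerm s1fun s1_invol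
def σ2 : Equiv.Perm (ℚ × ℚ) := Function.Involutive.toPerm s2fun s2_invol

/-- The Weyl group of G₂, generated by the two simple reflections. -/
def W : Subgroup (Equiv.Perm (ℚ × ℚ)) := Subgroup.closure {σ1, σ2}

/-- Word length with respect to the simple reflections `s₁`, `s₂`. -/
noncomputable def len (w : Equiv.Perm (ℚ × ℚ)) : ℕ :=
  sInf {n | ∃ l : List (Equiv.Perm (ℚ × ℚ)),
    l.length = n ∧ (∀ x ∈ l, x = σ1 ∨ x = σ2) ∧ l.prod = w}

/-- `ρ = 5α₁ + 3α₂`, the half sum of positive roots. -/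
def ρv : ℚ × ℚ := (5, 3)
/-- The fundamental weight `γ₁ = 2α₁ + α₂`. -/
def γ1 : ℚ × ℚ := (2, 1)
/-- The fundamental weight `γ₂ = 3α₁ + 2α₂`. -/
def γ2 : ℚ × ℚ := (3, 2)

/-- The dot action `w · λ = w(λ + ρ) - ρ`. -/
def dot (w : Equiv.Perm (ℚ × ℚ)) (μ : ℚ × ℚ) : ℚ × ℚ := w (μ + ρv) - ρv

/-- The positive roots of G₂. -/
def Φplus : Set (ℚ × ℚ) :=
  {α1, α2, α1 + α2, (2 : ℚ) • α1 + α2, (3 : ℚ) • α1 + α2, (3 : ℚ) • α1 + (2 : ℚ) • α2}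

/-- The negative roots of G₂. -/
def Φminus : Set (ℚ × ℚ) := (fun p => -p) '' Φplus

/-- `γ^{M₁} = α₁/2`. -/
def γM1 : ℚ × ℚ := (1/2, 0)
/-- `κ^{M₁} = γ₂/2`. -/
def κM1 : ℚ × ℚ := (3/2, 1)
/-- `γ^{M₂} = α₂/2`. -/
def γM2 : ℚ × ℚ := (0, 1/2)
/-- `κ^{M₂} = γ₁/2`. -/
def κM2 : ℚ × ℚ := (1, 1/2)

/-- Kostant representatives for the maximal parabolic `P₁`. -/
def WP1 : Set (Equiv.Perm (ℚ × ℚ)) :=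
  {1, σ2, σ2 * σ1, σ2 * σ1 * σ2, σ2 * σ1 * σ2 * σ1, σ2 * σ1 * σ2 * σ1 * σ2}

/-- Kostant representatives for the maximal parabolic `P₂`. -/
def WP2 : Set (Equiv.Perm (ℚ × ℚ)) :=
  {1, σ1, σ1 * σ2, σ1 * σ2 * σ1, σ1 * σ2 * σ1 * σ2, σ1 * σ2 * σ1 * σ2 * σ1}


/-! ### Auxiliary machinery -/

@[simp] lemma σ1_apply (p : ℚ × ℚ) : σ1 p = (-p.1 + 3 * p.2, p.2) := rfl
@[simp] lemma σ2_apply (p : ℚ × ℚ) : σ2 p = (p.1, p.1 - p.2) := rfl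

/-- Integer 2×2 matrices `(a, b, c, d)` acting as `p ↦ (a p₁ + b p₂, c p₁ + d p₂)`. -/
abbrev Mat := ℤ × ℤ × ℤ × ℤ

def mact (M : Mat) (p : ℚ × ℚ) : ℚ × ℚ :=
  ((M.1 : ℚ) * p.1 + (M.2.1 : ℚ) * p.2, (M.2.2.1 : ℚ) * p.1 + (M.2.2.2 : ℚ) * p.2)

def mmul (M N : Mat) : Mat :=
  (M.1 * N.1 + M.2.1 * N.2.2.1, M.1 * N.2.1 + M.2.1 * N.2.2.2,
   M.2.2.1 * N.1 + M.2.2.2 * N.2.2.1, M.2.2.1 * N.2.1 + M.2.2.2 * N.2.2.2)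

/-- The 12 matrices of the Weyl group of G₂ in the simple-root basis. -/
def ms : List Mat :=
  [(1,0,0,1), (-1,3,0,1), (1,0,1,-1), (2,-3,1,-1), (-1,3,-1,2), (-2,3,-1,2),
   (2,-3,1,-2), (1,-3,1,-2), (-2,3,-1,1), (-1,0,-1,1), (1,-3,0,-1), (-1,0,0,-1)]

lemma mact_mmul (M N : Mat) (p : ℚ × ℚ) : mact (mmul M N) p = mact M (mact N p) := by
  simp only [mact, mmul, Prod.mk.injEq]
  push_cast
  constructor <;> ring

lemma ms_mul : ∀ M ∈ ms, ∀ N ∈ ms, mmul M N ∈ ms := by decide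
lemma ms_inv : ∀ M ∈ ms, ∃ N ∈ ms, mmul M N = (1,0,0,1) := by decide

lemma W_rep {w : Equiv.Perm (ℚ × ℚ)} (hw : w ∈ W) :
    ∃ M ∈ ms, ∀ p, w p = mact M p := by
  induction hw using Subgroup.closure_induction with
  | mem x hx =>
    rw [Set.mem_insert_iff, Set.mem_singleton_iff] at hx
    rcases hx with rfl | rfl
    · exact ⟨(-1,3,0,1), by decide, fun p => by simp [mact, Prod.ext_iff]⟩
    · exact ⟨(1,0,1,-1), by decide, fun p => by simp [mact, Prod.ext_iff]; ring⟩
  | one => exact ⟨(1,0,0,1), by decide, fun p => by simp [mact]⟩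
  | mul x y hx hy ihx ihy =>
    obtain ⟨M, hM, hMa⟩ := ihx
    obtain ⟨N, hN, hNa⟩ := ihy
    exact ⟨mmul M N, ms_mul M hM N hN, fun p => by
      rw [Equiv.Perm.mul_apply, hNa, hMa, mact_mmul]⟩
  | inv x hx ihx =>
    obtain ⟨M, hM, hMa⟩ := ihx
    obtain ⟨N, hN, hMN⟩ := ms_inv M hM
    refine ⟨N, hN, fun p => ?_⟩
    apply x.injective
    rw [Equiv.Perm.coe_inv, Equiv.apply_symm_apply, hMa, ← mact_mmul, hMN]
    simp [mact]

lemma gen1_mem : σ1 ∈ W := Subgroup.subset_closure (Set.mem_insert _ _)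
lemma gen2_mem : σ2 ∈ W := Subgroup.subset_closure (Set.mem_insert_of_mem _ rfl)

/-! ### Word-length machinery -/

def istep (b : Bool) (p : ℤ × ℤ) : ℤ × ℤ :=
  if b then (-p.1 + 3 * p.2, p.2) else (p.1, p.1 - p.2)

def bwords : ℕ → List (List Bool)
  | 0 => [[]]
  | n + 1 => (bwords n).map (true :: ·) ++ (bwords n).map (false :: ·)

lemma mem_bwords : ∀ bl : List Bool, bl ∈ bwords bl.length := by
  intro bl
  induction bl with
  | nil => simp [bwords]
  | cons b t ih =>
    cases b
    · exact List.mem_append_right _ (List.mem_map_of_mem ih)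
    · exact List.mem_append_left _ (List.mem_map_of_mem ih)

lemma bridge : ∀ l : List (Equiv.Perm (ℚ × ℚ)), (∀ x ∈ l, x = σ1 ∨ x = σ2) →
    ∃ bl : List Bool, bl.length = l.length ∧
      l.prod ρv = (((bl.foldr istep (5, 3)).1 : ℚ), ((bl.foldr istep (5, 3)).2 : ℚ)) := by
  intro l
  induction l with
  | nil => exact fun _ => ⟨[], rfl, by norm_num [ρv]⟩
  | cons a t ih =>
    intro h
    obtain ⟨bl, hlen, hval⟩ := ih fun x hx => h x (List.mem_cons_of_mem _ hx)
    rcases h a List.mem_cons_self with rfl | rfl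
    · refine ⟨true :: bl, by simp [hlen], ?_⟩
      rw [List.prod_cons, Equiv.Perm.mul_apply, hval]
      simp [istep, Prod.ext_iff]
    · refine ⟨false :: bl, by simp [hlen], ?_⟩
      rw [List.prod_cons, Equiv.Perm.mul_apply, hval]
      simp [istep, Prod.ext_iff]

lemma len_lower (t : Equiv.Perm (ℚ × ℚ)) (v : ℤ × ℤ) (m : ℕ)
    (ht : t ρv = ((v.1 : ℚ), (v.2 : ℚ)))
    (hkey : ∀ k ≤ m, ∀ w ∈ bwords k, w.foldr istep (5, 3) ≠ v) :
    ∀ n ∈ {n | ∃ l : List (Equiv.Perm (ℚ × ℚ)),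
      l.length = n ∧ (∀ x ∈ l, x = σ1 ∨ x = σ2) ∧ l.prod = t}, m + 1 ≤ n := by
  rintro n ⟨l, rfl, hmem, hprod⟩
  by_contra hc
  push_neg at hc
  obtain ⟨bl, hbl, hval⟩ := bridge l hmem
  apply hkey bl.length (by omega) bl (mem_bwords bl)
  have h : (((bl.foldr istep (5, 3)).1 : ℚ), ((bl.foldr istep (5, 3)).2 : ℚ))
      = ((v.1 : ℚ), (v.2 : ℚ)) := by rw [← hval, hprod, ht]
  rw [Prod.mk.injEq] at h
  exact Prod.ext (by exact_mod_cast h.1) (by exact_mod_cast h.2)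

lemma key3a : ∀ k ≤ 2, ∀ w ∈ bwords k, w.foldr istep (5, 3) ≠ ((-1 : ℤ), (1 : ℤ)) := by decide
lemma key3b : ∀ k ≤ 2, ∀ w ∈ bwords k, w.foldr istep (5, 3) ≠ ((1 : ℤ), (-1 : ℤ)) := by decide
lemma key6 : ∀ k ≤ 5, ∀ w ∈ bwords k, w.foldr istep (5, 3) ≠ ((-5 : ℤ), (-3 : ℤ)) := by decide

lemma len_one : len 1 = 0 :=
  Nat.sInf_eq_zero.mpr (Or.inl ⟨[], rfl, by simp, rfl⟩)

lemma len_121 : len (σ1 * σ2 * σ1) = 3 := by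
  have hw : ∃ l : List (Equiv.Perm (ℚ × ℚ)), l.length = 3 ∧
      (∀ x ∈ l, x = σ1 ∨ x = σ2) ∧ l.prod = σ1 * σ2 * σ1 :=
    ⟨[σ1, σ2, σ1], rfl, by intro x hx; simp at hx; tauto, by simp [mul_assoc]⟩
  refine le_antisymm (Nat.sInf_le hw) (le_csInf ⟨3, hw⟩ ?_)
  exact len_lower _ (-1, 1) 2 (by norm_num [ρv, Equiv.Perm.mul_apply]) key3a

lemma len_212 : len (σ2 * σ1 * σ2) = 3 := by
  have hw : ∃ l : List (Equiv.Perm (ℚ × ℚ)), l.length = 3 ∧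
      (∀ x ∈ l, x = σ1 ∨ x = σ2) ∧ l.prod = σ2 * σ1 * σ2 :=
    ⟨[σ2, σ1, σ2], rfl, by intro x hx; simp at hx; tauto, by simp [mul_assoc]⟩
  refine le_antisymm (Nat.sInf_le hw) (le_csInf ⟨3, hw⟩ ?_)
  exact len_lower _ (1, -1) 2 (by norm_num [ρv, Equiv.Perm.mul_apply]) key3b

lemma len_w0 : len ((σ1 * σ2) ^ 3) = 6 := by
  have hw : ∃ l : List (Equiv.Perm (ℚ × ℚ)), l.length = 6 ∧
      (∀ x ∈ l, x = σ1 ∨ x = σ2) ∧ l.prod = (σ1 * σ2) ^ 3 :=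
    ⟨[σ1, σ2, σ1, σ2, σ1, σ2], rfl, by intro x hx; simp at hx; tauto, by
      simp [pow_succ, mul_assoc]⟩
  refine le_antisymm (Nat.sInf_le hw) (le_csInf ⟨6, hw⟩ ?_)
  exact len_lower _ (-5, -3) 5 (by norm_num [ρv, pow_succ, Equiv.Perm.mul_apply]) key6

/-- For `λ = 0`, the Weyl elements `w` with `w·0 = w(ρ) − ρ` having both coefficients even
in the fundamental weight basis are exactly `{1, s₁s₂s₁, s₂s₁s₂, (s₁s₂)³}`, of lengths
`0, 3, 3, 6`. -/
theorem g2_parity_trivial_weight :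
    {w : Equiv.Perm (ℚ × ℚ) | w ∈ W ∧ ∀ a b : ℚ,
        dot w 0 = a • γ1 + b • γ2 →
        (∃ k : ℤ, a = 2 * k) ∧ (∃ k : ℤ, b = 2 * k)}
      = {1, σ1 * σ2 * σ1, σ2 * σ1 * σ2, (σ1 * σ2) ^ 3} ∧
    len 1 = 0 ∧ len (σ1 * σ2 * σ1) = 3 ∧ len (σ2 * σ1 * σ2) = 3 ∧
    len ((σ1 * σ2) ^ 3) = 6 := by
  refine ⟨?_, len_one, len_121, len_212, len_w0⟩
  ext w
  simp only [Set.mem_setOf_eq, Set.mem_insert_iff, Set.mem_singleton_iff]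
  constructor
  · rintro ⟨hW, hpar⟩
    obtain ⟨M, hM, hact⟩ := W_rep hW
    fin_cases hM
    · exact Or.inl (Equiv.ext fun p => by rw [hact]; simp [mact])
    · exfalso
      obtain ⟨_, ⟨k, hk⟩⟩ := hpar (-2) 1 (by
        simp [dot, hact, mact, ρv, γ1, γ2, Prod.ext_iff]; norm_num)
      have : (1 : ℤ) = 2 * k := by exact_mod_cast hk
      omega
    · exfalso
      obtain ⟨⟨k, hk⟩, _⟩ := hpar 3 (-2) (by
        simp [dot, hact, mact, ρv, γ1, γ2, Prod.ext_iff]; norm_num)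
      have : (3 : ℤ) = 2 * k := by exact_mod_cast hk
      omega
    · exfalso
      obtain ⟨⟨k, hk⟩, _⟩ := hpar (-5) 2 (by
        simp [dot, hact, mact, ρv, γ1, γ2, Prod.ext_iff]; norm_num)
      have : (-5 : ℤ) = 2 * k := by exact_mod_cast hk
      omega
    · exfalso
      obtain ⟨_, ⟨k, hk⟩⟩ := hpar 4 (-3) (by
        simp [dot, hact, mact, ρv, γ1, γ2, Prod.ext_iff]; norm_num)
      have : (-3 : ℤ) = 2 * k := by exact_mod_cast hk
      omega
    · refine Or.inr (Or.inl (Equiv.ext fun p => ?_))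
      rw [hact]
      simp [mact, Equiv.Perm.mul_apply, Prod.ext_iff]
      constructor <;> ring
    · refine Or.inr (Or.inr (Or.inl (Equiv.ext fun p => ?_)))
      rw [hact]
      simp [mact, Equiv.Perm.mul_apply, Prod.ext_iff]
      constructor <;> ring
    · exfalso
      obtain ⟨_, ⟨k, hk⟩⟩ := hpar (-6) 1 (by
        simp [dot, hact, mact, ρv, γ1, γ2, Prod.ext_iff]; norm_num)
      have : (1 : ℤ) = 2 * k := by exact_mod_cast hk
      omega
    · exfalso
      obtain ⟨⟨k, hk⟩, _⟩ := hpar 3 (-4) (by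
        simp [dot, hact, mact, ρv, γ1, γ2, Prod.ext_iff]; norm_num)
      have : (3 : ℤ) = 2 * k := by exact_mod_cast hk
      omega
    · exfalso
      obtain ⟨⟨k, hk⟩, _⟩ := hpar (-5) 0 (by
        simp [dot, hact, mact, ρv, γ1, γ2, Prod.ext_iff]; norm_num)
      have : (-5 : ℤ) = 2 * k := by exact_mod_cast hk
      omega
    · exfalso
      obtain ⟨_, ⟨k, hk⟩⟩ := hpar 0 (-3) (by
        simp [dot, hact, mact, ρv, γ1, γ2, Prod.ext_iff]; norm_num)
      have : (-3 : ℤ) = 2 * k := by exact_mod_cast hk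
      omega
    · refine Or.inr (Or.inr (Or.inr (Equiv.ext fun p => ?_)))
      rw [hact]
      simp [mact, pow_succ, Equiv.Perm.mul_apply, Prod.ext_iff]
      constructor <;> ring
  · rintro (rfl | rfl | rfl | rfl)
    · refine ⟨one_mem W, fun a b hab => ?_⟩
      have h1 := congrArg Prod.fst hab
      have h2 := congrArg Prod.snd hab
      simp [dot, ρv, γ1, γ2, Equiv.Perm.mul_apply] at h1 h2
      exact ⟨⟨0, by push_cast; linarith⟩, ⟨0, by push_cast; linarith⟩⟩
    · refine ⟨mul_mem (mul_mem gen1_mem gen2_mem) gen1_mem, fun a b hab => ?_⟩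
      have h1 := congrArg Prod.fst hab
      have h2 := congrArg Prod.snd hab
      simp [dot, ρv, γ1, γ2, Equiv.Perm.mul_apply] at h1 h2
      exact ⟨⟨-3, by push_cast; linarith⟩, ⟨1, by push_cast; linarith⟩⟩
    · refine ⟨mul_mem (mul_mem gen2_mem gen1_mem) gen2_mem, fun a b hab => ?_⟩
      have h1 := congrArg Prod.fst hab
      have h2 := congrArg Prod.snd hab
      simp [dot, ρv, γ1, γ2, Equiv.Perm.mul_apply] at h1 h2
      exact ⟨⟨2, by push_cast; linarith⟩, ⟨-2, by push_cast; linarith⟩⟩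
    · refine ⟨pow_mem (mul_mem gen1_mem gen2_mem) 3, fun a b hab => ?_⟩
      have h1 := congrArg Prod.fst hab
      have h2 := congrArg Prod.snd hab
      simp [dot, ρv, γ1, γ2, pow_succ, Equiv.Perm.mul_apply] at h1 h2
      exact ⟨⟨-1, by push_cast; linarith⟩, ⟨-1, by push_cast; linarith⟩⟩

end G2
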